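/- Γ with its order and the topology generated by the sets ↑p° and ↓q⁻ (p, q rational) is a Priestley space: it is compact, the order is closed in Γ × Γ, and for any x ≰ y in Γ there is a clopen up-set containing x but not y. -/

import Mathlib

open scoped Classical

noncomputable section

/-- Validity predicate: `(r, false)` encodes `r⁻` for `r ∈ (0,1]`;
`(q, true)` encodes `q°` for rational `q ∈ [0,1]`. -/
def GammaValid (x : ℝ × Bool) : Prop :=
  (x.2 = false ∧ 0 < x.1 ∧ x.1 ≤ 1) ∨
  (x.2 = true ∧ 0 ≤ x.1 ∧ x.1 ≤ 1 ∧ ∃ q : ℚ, (q : ℝ) = x.1)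

lemma gammaValid_of (r : ℝ) (b : Bool) (h0 : 0 ≤ r) (h1 : r ≤ 1)
    (hr : b = true → ∃ q : ℚ, (q : ℝ) = r) (hm : b = false → 0 < r) :
    GammaValid (r, b) := by
  cases b
  · exact Or.inl ⟨rfl, hm rfl, h1⟩
  · exact Or.inr ⟨rfl, h0, h1, hr rfl⟩

/-- The doubled unit interval `Γ`, ordered lexicographically:
compare real values first, and `r⁻ < r°` at equal value. -/
abbrev Gamma : Type := {x : Lex (ℝ × Bool) // GammaValid (ofLex x)}

def Gamma.re (x : Gamma) : ℝ := (ofLex x.1).1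
def Gamma.tag (x : Gamma) : Bool := (ofLex x.1).2

def Gamma.mk' (r : ℝ) (b : Bool) (h : GammaValid (r, b)) : Gamma := ⟨toLex (r, b), h⟩

@[simp] lemma Gamma.re_mk' (r : ℝ) (b : Bool) (h : GammaValid (r, b)) :
    (Gamma.mk' r b h).re = r := rfl
@[simp] lemma Gamma.tag_mk' (r : ℝ) (b : Bool) (h : GammaValid (r, b)) :
    (Gamma.mk' r b h).tag = b := rfl

/-- `0°` -/
def gzero : Gamma :=
  Gamma.mk' 0 true (gammaValid_of _ _ le_rfl zero_le_one (fun _ => ⟨0, by norm_num⟩) (by simp))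

/-- `1°` -/
def gone : Gamma :=
  Gamma.mk' 1 true (gammaValid_of _ _ zero_le_one le_rfl (fun _ => ⟨1, by norm_num⟩) (by simp))

/-- `q°` for a rational `q ∈ [0,1]`. -/
def mkCirc (q : ℚ) (h0 : 0 ≤ q) (h1 : q ≤ 1) : Gamma :=
  Gamma.mk' (q : ℝ) true
    (gammaValid_of _ _ (by exact_mod_cast h0) (by exact_mod_cast h1)
      (fun _ => ⟨q, rfl⟩) (by simp))

/-- `r⁻` for a real `r ∈ (0,1]`. -/
def mkMinus (r : ℝ) (h0 : 0 < r) (h1 : r ≤ 1) : Gamma :=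
  Gamma.mk' r false
    (gammaValid_of _ _ h0.le h1 (by simp) (fun _ => h0))

lemma Gamma.le_iff {x y : Gamma} :
    x ≤ y ↔ x.re < y.re ∨ (x.re = y.re ∧ x.tag ≤ y.tag) := by
  change x.1 ≤ y.1 ↔ _
  rw [show x.1 = toLex (ofLex x.1) from rfl, show y.1 = toLex (ofLex y.1) from rfl,
    Prod.Lex.le_iff]
  rfl

lemma Gamma.re_nonneg (x : Gamma) : 0 ≤ x.re := by
  rcases x.2 with ⟨_, h, _⟩ | ⟨_, h, _⟩ <;> [exact le_of_lt h; exact h]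

lemma Gamma.re_le_one (x : Gamma) : x.re ≤ 1 := by
  rcases x.2 with ⟨_, _, h⟩ | ⟨_, _, h, _⟩ <;> exact h

lemma Gamma.tag_rat {x : Gamma} (h : x.tag = true) : ∃ q : ℚ, (q : ℝ) = x.re := by
  rcases x.2 with ⟨h', _⟩ | ⟨_, _, _, hq⟩
  · exact absurd (h'.symm.trans h) (by simp)
  · exact hq

lemma Gamma.tag_pos {x : Gamma} (h : x.tag = false) : 0 < x.re := by
  rcases x.2 with ⟨_, h', _⟩ | ⟨h', _⟩
  · exact h'
  · exact absurd (h'.symm.trans h) (by simp)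

lemma Gamma.re_mono {x y : Gamma} (h : x ≤ y) : x.re ≤ y.re := by
  rcases Gamma.le_iff.1 h with h | ⟨h, _⟩
  · exact le_of_lt h
  · exact le_of_eq h

lemma Gamma.ext' {x y : Gamma} (hre : x.re = y.re) (htag : x.tag = y.tag) : x = y := by
  apply Subtype.ext
  have hx : x.1 = toLex (x.re, x.tag) := rfl
  have hy : y.1 = toLex (y.re, y.tag) := rfl
  rw [hx, hy, hre, htag]

/-- The partial minus `∸` on `Γ`, made total by returning `0°` outside its domain
`{(x,y) | y ≤ x}`.  On the domain:  `r° ∸ s° = (r−s)°`, `r⁻ ∸ s° = (r−s)⁻`, and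
`r° ∸ s⁻ = r⁻ ∸ s⁻ = (r−s)°` if `r−s ∈ ℚ`, `(r−s)⁻` otherwise. -/
def gsub (x y : Gamma) : Gamma :=
  if h : y ≤ x then
    Gamma.mk' (x.re - y.re)
      (if y.tag then x.tag else if (∃ q : ℚ, (q : ℝ) = x.re - y.re) then true else false)
      (by
        have hle : y.re ≤ x.re := Gamma.re_mono h
        have hx1 := x.re_le_one
        have hy0 := y.re_nonneg
        apply gammaValid_of _ _ (by linarith) (by linarith)
        · intro ht
          split_ifs at ht with hy hq
          · obtain ⟨qx, hqx⟩ := Gamma.tag_rat ht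
            obtain ⟨qy, hqy⟩ := Gamma.tag_rat hy
            exact ⟨qx - qy, by push_cast [hqx, hqy]; ring⟩
          · exact hq
        · intro ht
          split_ifs at ht with hy hq
          · rcases Gamma.le_iff.1 h with hlt | ⟨_, htag⟩
            · linarith
            · rw [hy, ht] at htag; exact absurd htag (by decide)
          · refine lt_of_le_of_ne (by linarith) fun e => hq ⟨0, by rw [← e]; norm_num⟩)
  else gzero

/-- The derived operation `∸'` given by `x ∸' y = ⋁ {x ∸ q° ∣ y < q° ≤ x}`,
described here by its explicit formula (and again made total by `0°` off-domain). -/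
def gsub' (x y : Gamma) : Gamma :=
  if h : y ≤ x then
    Gamma.mk' (x.re - y.re)
      (if x.re - y.re = 0 then true
       else if (y.tag = false ∧ ∃ q : ℚ, (q : ℝ) = y.re) then x.tag else false)
      (by
        have hle : y.re ≤ x.re := Gamma.re_mono h
        have hx1 := x.re_le_one
        have hy0 := y.re_nonneg
        apply gammaValid_of _ _ (by linarith) (by linarith)
        · intro ht
          split_ifs at ht with h0 hc
          · exact ⟨0, by rw [h0]; norm_num⟩
          · obtain ⟨qx, hqx⟩ := Gamma.tag_rat ht
            obtain ⟨qy, hqy⟩ := hc.2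
            exact ⟨qx - qy, by push_cast [hqx, hqy]; ring⟩
        · intro ht
          split_ifs at ht with h0 hc
          · exact lt_of_le_of_ne (by linarith) (Ne.symm h0)
          · exact lt_of_le_of_ne (by linarith) (Ne.symm h0))
  else gzero

/-- The partial plus on `Γ` (total, with junk value `0°` when the sum exceeds `1`):
`r° + s° = (r+s)°` and any sum involving a `⁻`-element is a `⁻`-element. -/
def gadd (x y : Gamma) : Gamma :=
  if h : x.re + y.re ≤ 1 then
    Gamma.mk' (x.re + y.re) (x.tag && y.tag)
      (by
        have hx0 := x.re_nonneg
        have hy0 := y.re_nonneg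
        apply gammaValid_of _ _ (by linarith) h
        · intro ht
          rw [Bool.and_eq_true] at ht
          obtain ⟨qx, hqx⟩ := Gamma.tag_rat ht.1
          obtain ⟨qy, hqy⟩ := Gamma.tag_rat ht.2
          exact ⟨qx + qy, by push_cast [hqx, hqy]; ring⟩
        · intro ht
          rcases Bool.and_eq_false_iff.1 ht with hx | hy
          · have := Gamma.tag_pos hx; linarith
          · have := Gamma.tag_pos hy; linarith)
  else gzero

/-- Finite sums in `Γ` (total, with junk value `0°` when the real sum exceeds `1`):
real parts add up, and the result is a `°`-element iff every summand is. -/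
def gsum {α : Type*} (s : Finset α) (f : α → Gamma) : Gamma :=
  if h : ∑ x ∈ s, (f x).re ≤ 1 then
    Gamma.mk' (∑ x ∈ s, (f x).re) (if ∀ x ∈ s, (f x).tag = true then true else false)
      (by
        have h0 : 0 ≤ ∑ x ∈ s, (f x).re :=
          Finset.sum_nonneg fun x _ => (f x).re_nonneg
        apply gammaValid_of _ _ h0 h
        · intro ht
          split_ifs at ht with hall
          · have : ∀ x ∈ s, ∃ q : ℚ, (q : ℝ) = (f x).re := fun x hx => Gamma.tag_rat (hall x hx)
            choose g hg using this
            refine ⟨∑ x ∈ s.attach, g x.1 x.2, ?_⟩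
            push_cast
            rw [← Finset.sum_attach s fun x => (f x).re]
            exact Finset.sum_congr rfl fun x _ => hg x.1 x.2
        · intro ht
          split_ifs at ht with hall
          · push_neg at hall
            obtain ⟨x, hxs, hx⟩ := hall
            replace hx : (f x).tag = false := by
              cases hxt : (f x).tag
              · rfl
              · exact absurd hxt hx
            calc (0:ℝ) < (f x).re := Gamma.tag_pos hx
              _ ≤ _ := Finset.single_le_sum (fun y _ => (f y).re_nonneg) hxs)
  else gzero

/-- The collapsing map `γ : Γ → [0,1]`, `r⁻, r° ↦ r`. -/
def gammaMap (x : Gamma) : unitInterval := ⟨x.re, x.re_nonneg, x.re_le_one⟩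

/-- The section `ι : [0,1] → Γ`: rationals go to `°`-elements, irrationals to `⁻`-elements. -/
def iota (r : unitInterval) : Gamma :=
  if h : ∃ q : ℚ, (q : ℝ) = r.1 then
    Gamma.mk' r.1 true (gammaValid_of _ _ r.2.1 r.2.2 (fun _ => h) (by simp))
  else
    Gamma.mk' r.1 false
      (gammaValid_of _ _ r.2.1 r.2.2 (by simp)
        (fun _ => lt_of_le_of_ne r.2.1 fun e => h ⟨0, by rw [← e]; norm_num⟩))

/-- Subbasis for the Priestley topology on `Γ`: the sets `↑p°` (for `p ∈ ℚ ∩ [0,1]`) and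
`↓q⁻` (for `q ∈ ℚ ∩ (0,1]`). -/
def gammaSubbasis : Set (Set Gamma) :=
  {S | ∃ x : Gamma, x.tag = true ∧ S = Set.Ici x} ∪
  {S | ∃ x : Gamma, x.tag = false ∧ (∃ q : ℚ, (q : ℝ) = x.re) ∧ S = Set.Iic x}

instance : TopologicalSpace Gamma := TopologicalSpace.generateFrom gammaSubbasis

/-- `Γ`-valued (finitely additive, probability) measures on a bounded lattice `D`. -/
def IsGMeasure {D : Type*} [Lattice D] [BoundedOrder D] (μ : D → Gamma) : Prop :=
  μ ⊥ = gzero ∧ μ ⊤ = gone ∧ Monotone μ ∧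
  ∀ a b : D, gsub' (μ a) (μ (a ⊓ b)) ≤ gsub (μ (a ⊔ b)) (μ b) ∧
    gsub' (μ (a ⊔ b)) (μ b) ≤ gsub (μ a) (μ (a ⊓ b))

/-- Classical finitely additive probability measures on a bounded lattice `D`. -/
def IsCMeasure {D : Type*} [Lattice D] [BoundedOrder D] (m : D → ℝ) : Prop :=
  m ⊥ = 0 ∧ m ⊤ = 1 ∧ Monotone m ∧
  ∀ a b : D, m a + m b = m (a ⊔ b) + m (a ⊓ b)


section GammaPriestleyAux

open Set TopologicalSpace

lemma Gamma.lt_iff' {x y : Gamma} :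
    x < y ↔ x.re < y.re ∨ (x.re = y.re ∧ x.tag = false ∧ y.tag = true) := by
  rw [lt_iff_le_and_ne, Gamma.le_iff]
  constructor
  · rintro ⟨h | ⟨hre, htag⟩, hne⟩
    · exact Or.inl h
    · cases hx : x.tag <;> cases hy : y.tag
      · exact absurd (Gamma.ext' hre (hx.trans hy.symm)) hne
      · exact Or.inr ⟨hre, rfl, rfl⟩
      · rw [hx, hy] at htag; exact absurd htag (by decide)
      · exact absurd (Gamma.ext' hre (hx.trans hy.symm)) hne
  · rintro (h | ⟨hre, hx, hy⟩)
    · exact ⟨Or.inl h, fun e => by rw [e] at h; exact lt_irrefl _ h⟩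
    · refine ⟨Or.inr ⟨hre, by rw [hx]; exact Bool.false_le _⟩, fun e => ?_⟩
      rw [e, hy] at hx
      exact absurd hx (by decide)

lemma gzero_le (u : Gamma) : gzero ≤ u := by
  rcases eq_or_lt_of_le u.re_nonneg with h | h
  · have hut : u.tag = true := by
      cases ht : u.tag
      · exact absurd (Gamma.tag_pos ht) (by rw [← h]; exact lt_irrefl 0)
      · rfl
    exact Gamma.le_iff.2 (Or.inr ⟨h, le_of_eq hut.symm⟩)
  · exact Gamma.le_iff.2 (Or.inl h)

/-- The supremum of a set in `Γ`. -/
noncomputable def gSup (S : Set Gamma) : Gamma :=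
  if hS : S.Nonempty then
    if hq : ∃ x ∈ S, x.re = sSup (Gamma.re '' S) ∧ x.tag = true then
      Gamma.mk' (sSup (Gamma.re '' S)) true (by
        obtain ⟨x, hxS, hxre, hxt⟩ := hq
        obtain ⟨q, hq'⟩ := Gamma.tag_rat hxt
        refine gammaValid_of _ _ ?_ ?_ (fun _ => ⟨q, by rw [hq', hxre]⟩) (by simp)
        · rw [← hxre]; exact x.re_nonneg
        · exact csSup_le (hS.image _) (by rintro r ⟨z, _, rfl⟩; exact z.re_le_one))
    else
      Gamma.mk' (sSup (Gamma.re '' S)) false (by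
        obtain ⟨x, hxS⟩ := hS
        have hbdd : BddAbove (Gamma.re '' S) :=
          ⟨1, by rintro r ⟨z, _, rfl⟩; exact z.re_le_one⟩
        have hxle : x.re ≤ sSup (Gamma.re '' S) := le_csSup hbdd ⟨x, hxS, rfl⟩
        have hpos : 0 < sSup (Gamma.re '' S) := by
          rcases lt_or_eq_of_le (le_trans x.re_nonneg hxle) with h | h
          · exact h
          · exfalso
            have hx0 : x.re = 0 := le_antisymm (by rw [← h] at hxle; exact hxle) x.re_nonneg
            cases hxt : x.tag
            · exact absurd (Gamma.tag_pos hxt) (by rw [hx0]; exact lt_irrefl 0)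
            · exact hq ⟨x, hxS, by rw [hx0, ← h], hxt⟩
        refine gammaValid_of _ _ hpos.le ?_ (by simp) (fun _ => hpos)
        exact csSup_le ((Set.nonempty_of_mem hxS).image _) (by rintro r ⟨z, _, rfl⟩; exact z.re_le_one))
  else gzero

noncomputable instance : SupSet Gamma := ⟨gSup⟩

lemma isLUB_gSup (S : Set Gamma) : IsLUB S (sSup S) := by
  show IsLUB S (gSup S)
  by_cases hS : S.Nonempty
  · have hbdd : BddAbove (Gamma.re '' S) := ⟨1, by rintro r ⟨z, _, rfl⟩; exact z.re_le_one⟩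
    have hub : ∀ z ∈ S, z.re ≤ sSup (Gamma.re '' S) := fun z hz => le_csSup hbdd ⟨z, hz, rfl⟩
    have hlub : ∀ u : Gamma, u ∈ upperBounds S → sSup (Gamma.re '' S) ≤ u.re := fun u hu =>
      csSup_le (hS.image _) (by rintro r ⟨z, hz, rfl⟩; exact Gamma.re_mono (hu hz))
    by_cases hq : ∃ x ∈ S, x.re = sSup (Gamma.re '' S) ∧ x.tag = true
    · have hre : (gSup S).re = sSup (Gamma.re '' S) ∧ (gSup S).tag = true := by
        simp only [gSup, dif_pos hS, dif_pos hq]; exact ⟨rfl, rfl⟩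
      constructor
      · intro z hz
        rcases lt_or_eq_of_le (hub z hz) with hl | he
        · exact Gamma.le_iff.2 (Or.inl (by rw [hre.1]; exact hl))
        · exact Gamma.le_iff.2 (Or.inr ⟨by rw [hre.1, ← he], by rw [hre.2]; exact Bool.le_true _⟩)
      · intro u hu
        rcases lt_or_eq_of_le (hlub u hu) with hl | he
        · exact Gamma.le_iff.2 (Or.inl (by rw [hre.1]; exact hl))
        · obtain ⟨x, hxS, hxre, hxt⟩ := hq
          have hut : u.tag = true := by
            rcases Gamma.le_iff.1 (hu hxS) with h | ⟨_, h⟩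
            · exfalso; rw [hxre, he] at h; exact lt_irrefl _ h
            · rw [hxt] at h
              cases ht : u.tag
              · rw [ht] at h; exact absurd h (by decide)
              · rfl
          exact Gamma.le_iff.2 (Or.inr ⟨by rw [hre.1, he], by rw [hre.2, hut]⟩)
    · have hre : (gSup S).re = sSup (Gamma.re '' S) ∧ (gSup S).tag = false := by
        simp only [gSup, dif_pos hS, dif_neg hq]; exact ⟨rfl, rfl⟩
      constructor
      · intro z hz
        rcases lt_or_eq_of_le (hub z hz) with hl | he
        · exact Gamma.le_iff.2 (Or.inl (by rw [hre.1]; exact hl))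
        · have hzt : z.tag = false := by
            cases ht : z.tag
            · rfl
            · exact absurd ⟨z, hz, he, ht⟩ hq
          exact Gamma.le_iff.2 (Or.inr ⟨by rw [hre.1, ← he], by rw [hre.2, hzt]⟩)
      · intro u hu
        rcases lt_or_eq_of_le (hlub u hu) with hl | he
        · exact Gamma.le_iff.2 (Or.inl (by rw [hre.1]; exact hl))
        · exact Gamma.le_iff.2 (Or.inr ⟨by rw [hre.1, he], by rw [hre.2]; exact Bool.false_le _⟩)
  · have hSe : S = ∅ := Set.not_nonempty_iff_eq_empty.1 hS
    have : gSup S = gzero := by simp only [gSup, dif_neg hS]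
    rw [this, hSe]
    exact ⟨fun z hz => absurd hz (Set.notMem_empty z), fun u _ => gzero_le u⟩

noncomputable instance : CompleteLattice Gamma where
  __ := (inferInstance : Lattice Gamma)
  __ := completeLatticeOfSup Gamma isLUB_gSup

noncomputable instance : CompleteLinearOrder Gamma :=
  { (inferInstance : CompleteLattice Gamma), (inferInstance : LinearOrder Gamma),
    LinearOrder.toBiheytingAlgebra _ with }

lemma isOpen_Ici_circ {z : Gamma} (h : z.tag = true) : IsOpen (Set.Ici z) :=
  isOpen_generateFrom_of_mem (Or.inl ⟨z, h, rfl⟩)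

lemma isOpen_Iic_minus {z : Gamma} (h1 : z.tag = false) (h2 : ∃ q : ℚ, (q : ℝ) = z.re) :
    IsOpen (Set.Iic z) :=
  isOpen_generateFrom_of_mem (Or.inr ⟨z, h1, h2, rfl⟩)

lemma gIoi_eq (a : Gamma) :
    Set.Ioi a = ⋃ z ∈ {z : Gamma | z.tag = true ∧ a < z}, Set.Ici z := by
  ext y
  simp only [Set.mem_Ioi, Set.mem_iUnion, Set.mem_Ici, Set.mem_setOf_eq, exists_prop]
  constructor
  · intro hy
    rcases Gamma.lt_iff'.1 hy with hlt | ⟨_, _, hyt⟩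
    · obtain ⟨p, hp1, hp2⟩ := exists_rat_btwn hlt
      have h0 : (0:ℚ) ≤ p := by
        have := a.re_nonneg
        exact_mod_cast le_of_lt (lt_of_le_of_lt this hp1)
      have h1 : p ≤ (1:ℚ) := by
        have := y.re_le_one
        exact_mod_cast le_of_lt (lt_of_lt_of_le hp2 this)
      refine ⟨mkCirc p h0 h1, ⟨rfl, ?_⟩, ?_⟩
      · exact Gamma.lt_iff'.2 (Or.inl hp1)
      · exact Gamma.le_iff.2 (Or.inl hp2)
    · exact ⟨y, ⟨hyt, hy⟩, le_rfl⟩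
  · rintro ⟨z, ⟨_, hz⟩, hzy⟩
    exact lt_of_lt_of_le hz hzy

lemma gIio_eq (a : Gamma) :
    Set.Iio a =
      ⋃ z ∈ {z : Gamma | z.tag = false ∧ (∃ q : ℚ, (q : ℝ) = z.re) ∧ z < a}, Set.Iic z := by
  ext y
  simp only [Set.mem_Iio, Set.mem_iUnion, Set.mem_Iic, Set.mem_setOf_eq, exists_prop]
  constructor
  · intro hy
    rcases Gamma.lt_iff'.1 hy with hlt | ⟨hre, hyt, hat⟩
    · obtain ⟨p, hp1, hp2⟩ := exists_rat_btwn hlt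
      have h0 : (0:ℝ) < p := lt_of_le_of_lt y.re_nonneg hp1
      have h1 : (p:ℝ) ≤ 1 := le_of_lt (lt_of_lt_of_le hp2 a.re_le_one)
      refine ⟨mkMinus p h0 h1, ⟨rfl, ⟨p, rfl⟩, ?_⟩, ?_⟩
      · exact Gamma.lt_iff'.2 (Or.inl hp2)
      · exact Gamma.le_iff.2 (Or.inl hp1)
    · obtain ⟨q, hq⟩ := Gamma.tag_rat hat
      exact ⟨y, ⟨hyt, ⟨q, hq.trans hre.symm⟩, hy⟩, le_rfl⟩
  · rintro ⟨z, ⟨_, _, hz⟩, hyz⟩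
    exact lt_of_le_of_lt hyz hz

lemma isOpen_gIoi (a : Gamma) : IsOpen (Set.Ioi a) := by
  rw [gIoi_eq]; exact isOpen_biUnion fun z hz => isOpen_Ici_circ hz.1

lemma isOpen_gIio (a : Gamma) : IsOpen (Set.Iio a) := by
  rw [gIio_eq]; exact isOpen_biUnion fun z hz => isOpen_Iic_minus hz.1 hz.2.1

lemma Ici_eq_Ioi_gamma {z : Gamma} (hz : z.tag = true) (h0 : z.re ≠ 0) :
    Set.Ici z = Set.Ioi (mkMinus z.re (lt_of_le_of_ne z.re_nonneg (Ne.symm h0)) z.re_le_one) := by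
  ext y
  simp only [Set.mem_Ici, Set.mem_Ioi]
  constructor
  · intro h
    rcases Gamma.le_iff.1 h with h | ⟨h1, h2⟩
    · exact Gamma.lt_iff'.2 (Or.inl h)
    · have hyt : y.tag = true := by
        cases ht : y.tag
        · rw [hz, ht] at h2; exact absurd h2 (by decide)
        · rfl
      exact Gamma.lt_iff'.2 (Or.inr ⟨h1, rfl, hyt⟩)
  · intro h
    rcases Gamma.lt_iff'.1 h with h | ⟨h1, _, h2⟩
    · exact Gamma.le_iff.2 (Or.inl h)
    · exact Gamma.le_iff.2 (Or.inr ⟨h1, by simp [hz, h2]⟩)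

lemma Iic_eq_Iio_gamma {z : Gamma} (hz : z.tag = false) {q : ℚ} (hq : (q : ℝ) = z.re)
    (h0 : 0 ≤ q) (h1 : q ≤ 1) :
    Set.Iic z = Set.Iio (mkCirc q h0 h1) := by
  ext y
  simp only [Set.mem_Iic, Set.mem_Iio]
  constructor
  · intro h
    rcases Gamma.le_iff.1 h with h | ⟨h1', h2⟩
    · exact Gamma.lt_iff'.2 (Or.inl (by show y.re < ((q : ℚ) : ℝ); rw [hq]; exact h))
    · have hyt : y.tag = false := by
        cases ht : y.tag
        · rfl
        · rw [hz, ht] at h2; exact absurd h2 (by decide)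
      exact Gamma.lt_iff'.2 (Or.inr ⟨by show y.re = ((q : ℚ) : ℝ); rw [hq]; exact h1', hyt, rfl⟩)
  · intro h
    rcases Gamma.lt_iff'.1 h with h | ⟨h1', h2, _⟩
    · exact Gamma.le_iff.2 (Or.inl (by rw [← hq]; exact h))
    · refine Gamma.le_iff.2 (Or.inr ⟨?_, by simp [hz, h2]⟩)
      rw [← hq]; exact h1'

lemma gamma_topology_eq :
    (inferInstance : TopologicalSpace Gamma) =
      TopologicalSpace.generateFrom {s : Set Gamma | ∃ a, s = Set.Ioi a ∨ s = Set.Iio a} := by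
  apply le_antisymm
  · apply le_generateFrom
    rintro s ⟨a, rfl | rfl⟩
    exacts [isOpen_gIoi a, isOpen_gIio a]
  · apply le_generateFrom
    rintro s (⟨z, hz, rfl⟩ | ⟨z, hz, ⟨q, hq⟩, rfl⟩)
    · by_cases h0 : z.re = 0
      · have huniv : Set.Ici z = Set.univ := by
          ext y
          simp only [Set.mem_Ici, Set.mem_univ, iff_true]
          rcases eq_or_lt_of_le y.re_nonneg with h | h
          · have hyt : y.tag = true := by
              cases ht : y.tag
              · exact absurd (Gamma.tag_pos ht) (by rw [← h]; exact lt_irrefl 0)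
              · rfl
            exact Gamma.le_iff.2 (Or.inr ⟨h0.trans h, le_of_eq (hz.trans hyt.symm)⟩)
          · exact Gamma.le_iff.2 (Or.inl (h0 ▸ h))
        rw [huniv]
        exact TopologicalSpace.GenerateOpen.univ
      · rw [Ici_eq_Ioi_gamma hz h0]
        exact TopologicalSpace.GenerateOpen.basic _ ⟨_, Or.inl rfl⟩
    · have h0q : (0:ℚ) ≤ q := by
        have := Gamma.tag_pos hz
        rw [← hq] at this
        exact_mod_cast this.le
      have h1q : q ≤ 1 := by
        have := z.re_le_one
        rw [← hq] at this
        exact_mod_cast this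
      rw [Iic_eq_Iio_gamma hz hq h0q h1q]
      exact TopologicalSpace.GenerateOpen.basic _ ⟨_, Or.inr rfl⟩

instance : OrderTopology Gamma := ⟨gamma_topology_eq⟩

lemma isClosed_Ici_circ {z : Gamma} (_ : z.tag = true) : IsClosed (Set.Ici z) := by
  rw [← isOpen_compl_iff, Set.compl_Ici]
  exact isOpen_gIio z

end GammaPriestleyAux

/-- `Γ` with its order and topology is a Priestley space: compact, with
closed order, and totally order-disconnected. -/
theorem gamma_priestley :
    CompactSpace Gamma ∧
    IsClosed {p : Gamma × Gamma | p.1 ≤ p.2} ∧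
    ∀ x y : Gamma, ¬ x ≤ y →
      ∃ C : Set Gamma, IsClopen C ∧ IsUpperSet C ∧ x ∈ C ∧ y ∉ C := by
  refine ⟨inferInstance, ?_, ?_⟩
  · exact OrderClosedTopology.isClosed_le'
  · intro x y hxy
    have hyx : y < x := not_le.mp hxy
    rcases Gamma.lt_iff'.1 hyx with hlt | ⟨hre, hyt, hxt⟩
    · obtain ⟨p, hp1, hp2⟩ := exists_rat_btwn hlt
      have h0 : (0:ℚ) ≤ p := by
        have := y.re_nonneg
        exact_mod_cast (this.trans_lt hp1).le
      have h1 : p ≤ (1:ℚ) := by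
        have := x.re_le_one
        exact_mod_cast (hp2.trans_le this).le
      refine ⟨Set.Ici (mkCirc p h0 h1), ⟨isClosed_Ici_circ rfl, isOpen_Ici_circ rfl⟩,
        isUpperSet_Ici _, Gamma.le_iff.2 (Or.inl hp2), fun hmem => ?_⟩
      have hle : ((p : ℚ) : ℝ) ≤ y.re := Gamma.re_mono hmem
      exact absurd hle (not_le.2 hp1)
    · exact ⟨Set.Ici x, ⟨isClosed_Ici_circ hxt, isOpen_Ici_circ hxt⟩,
        isUpperSet_Ici _, Set.self_mem_Ici, hxy⟩
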